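/- For every integer p ≥ 1, C_p = (−1)^p · [ Σ_{m=1}^{⌊p/2⌋} 2^{2m+1}·binom(2p−2m−1, p−1)·ζ(2m) − binom(2p−1, p−1) − 2^{2p−1} ], where ζ denotes the Riemann zeta function. -/

import Mathlib

open Real

/-- `C p = Σ_{n=1}^∞ 2^{2p}/(n^p (n+2)^p)`. -/
noncomputable def C (p : ℕ) : ℝ :=
  ∑' n : ℕ, (2 : ℝ) ^ (2 * p) / (((n : ℝ) + 1) ^ p * ((n : ℝ) + 3) ^ p)

section Aux
open Finset
lemma hockey (q : ℕ) : ∀ M : ℕ, ∑ i ∈ range (M+1), (q+i).choose i = (q+M+1).choose M := by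
  intro M
  induction M with
  | zero => simp
  | succ M ih =>
    rw [Finset.sum_range_succ, ih, show q+(M+1) = q+M+1 by omega]
    rw [show (q+M+1+1).choose (M+1) = (q+M+1).choose M + (q+M+1).choose (M+1) from Nat.choose_succ_succ _ _]

lemma tri_swap {M : Type*} [AddCommMonoid M] (n : ℕ) (f : ℕ → ℕ → M) :
    ∑ i ∈ range n, ∑ j ∈ range (n - i), f i j
      = ∑ j ∈ range n, ∑ i ∈ range (n - j), f i j := by
  have key : ∀ i < n, ∀ g : ℕ → M, ∑ j ∈ range (n - i), g j
      = ∑ j ∈ range n, if i + j < n then g j else 0 := by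
    intro i hi g
    rw [← Finset.sum_filter]
    congr 1
    ext j
    simp only [mem_filter, mem_range]
    omega
  rw [Finset.sum_congr rfl (fun i hi => key i (mem_range.1 hi) _),
    Finset.sum_comm]
  refine Finset.sum_congr rfl (fun j hj => ?_)
  rw [key j (mem_range.1 hj) _]
  refine Finset.sum_congr rfl (fun i _ => ?_)
  rw [Nat.add_comm]

lemma Lrec (a t : ℝ) (h : a + t = a * t) : ∀ k : ℕ,
    (a*t) * (a^k + t^k) = (a+t) + ∑ j ∈ range (k+1), (a^(j+1) + t^(j+1)) := by
  intro k
  induction k with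
  | zero =>
    simp only [pow_zero, Finset.sum_range_succ, Finset.range_zero, Finset.sum_empty,
      zero_add, pow_one]
    linear_combination (-2)*h
  | succ k ih =>
    have newton : (a*t) * (a^(k+1) + t^(k+1))
        = (a^(k+2) + t^(k+2)) + (a*t) * (a^k + t^k) := by
      linear_combination (-(a^(k+1)) - t^(k+1)) * h
    rw [newton, ih, Finset.sum_range_succ (fun j => a^(j+1)+t^(j+1)) (k+1)]
    ring

lemma starAux (a t : ℝ) (h : a + t = a * t) : ∀ q : ℕ,
    (a*t)^(q+1) = ∑ i ∈ range (q+1), ((q+i).choose i : ℝ) * (a^(q+1-i) + t^(q+1-i)) := by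
  intro q
  induction q with
  | zero => simpa using h.symm
  | succ q ih =>
    have key : ∀ i ∈ range (q+1), ((q+i).choose i : ℝ) * ((a*t)*(a^(q+1-i) + t^(q+1-i)))
        = ((q+i).choose i : ℝ)*(a+t)
          + ∑ j ∈ range (q+2-i), ((q+i).choose i : ℝ) * (a^(j+1)+t^(j+1)) := by
      intro i hi
      have hi' : i ≤ q := by simpa [Nat.lt_succ_iff] using hi
      rw [show q+2-i = (q+1-i)+1 by omega, Lrec a t h (q+1-i), mul_add, Finset.mul_sum]
    calc (a*t)^(q+1+1) = (a*t) * (a*t)^(q+1) := by ring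
      _ = ∑ i ∈ range (q+1), ((q+i).choose i : ℝ) * ((a*t)*(a^(q+1-i)+t^(q+1-i))) := by
          rw [ih, Finset.mul_sum]; exact Finset.sum_congr rfl (fun i _ => by ring)
      _ = ∑ i ∈ range (q+1), (((q+i).choose i : ℝ)*(a+t)
            + ∑ j ∈ range (q+2-i), ((q+i).choose i : ℝ)*(a^(j+1)+t^(j+1))) :=
          Finset.sum_congr rfl key
      _ = (∑ i ∈ range (q+1), ((q+i).choose i:ℝ))*(a+t)
            + ∑ i ∈ range (q+1), ∑ j ∈ range (q+2-i), ((q+i).choose i:ℝ)*(a^(j+1)+t^(j+1)) := by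
          rw [Finset.sum_add_distrib, Finset.sum_mul]
      _ = ∑ i ∈ range (q+2), ∑ j ∈ range (q+2-i), ((q+i).choose i:ℝ)*(a^(j+1)+t^(j+1)) := by
          rw [Finset.sum_range_succ (fun i => ∑ j ∈ range (q+2-i), ((q+i).choose i:ℝ)*(a^(j+1)+t^(j+1))) (q+1)]
          have h1 : ∑ i ∈ range (q+1), ((q+i).choose i:ℝ) = ((2*q+1).choose q : ℝ) := by
            rw [← Nat.cast_sum]
            norm_cast
            rw [hockey q q]; congr 1; omega
          have h2 : (q+(q+1)).choose (q+1) = (2*q+1).choose q := by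
            rw [show q+(q+1) = 2*q+1 by omega]
            rw [show q+1 = (2*q+1) - q by omega]
            exact Nat.choose_symm (by omega)
          rw [show q+2-(q+1) = 1 by omega]
          simp only [Finset.range_one, Finset.sum_singleton, pow_one, h2, h1]
          ring
      _ = ∑ j ∈ range (q+2), ∑ i ∈ range (q+2-j), ((q+i).choose i:ℝ)*(a^(j+1)+t^(j+1)) :=
          tri_swap (q+2) _
      _ = ∑ j ∈ range (q+2), ((2*q+2-j).choose (q+1-j) : ℝ)*(a^(j+1)+t^(j+1)) := by
          refine Finset.sum_congr rfl (fun j hj => ?_)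
          have hj' : j ≤ q+1 := by simpa [Nat.lt_succ_iff] using hj
          rw [← Finset.sum_mul, ← Nat.cast_sum]
          congr 2
          rw [show q+2-j = (q+1-j)+1 by omega, hockey q (q+1-j)]
          congr 1; omega
      _ = ∑ i ∈ range (q+2), ((q+1+i).choose i : ℝ) * (a^(q+1+1-i) + t^(q+1+1-i)) := by
          rw [← Finset.sum_range_reflect (fun i => ((q+1+i).choose i : ℝ) * (a^(q+1+1-i) + t^(q+1+1-i))) (q+2)]
          refine Finset.sum_congr rfl (fun j hj => ?_)
          have hj' : j ≤ q+1 := by simpa [Nat.lt_succ_iff] using hj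
          rw [show q+2-1-j = q+1-j by omega, show q+1+(q+1-j) = 2*q+2-j by omega,
            show q+1+1-(q+1-j) = j+1 by omega]

noncomputable def Z (k : ℕ) : ℝ := ∑' n : ℕ, 1/((n:ℝ)+1)^k

lemma summable_shift (c k : ℕ) (hk : 2 ≤ k) :
    Summable (fun n : ℕ => 1/((n:ℝ)+c)^k) := by
  have h0 : Summable (fun n : ℕ => 1/(n:ℝ)^k) := Real.summable_one_div_nat_pow.2 hk
  have h1 := (summable_nat_add_iff (f := fun n : ℕ => 1/(n:ℝ)^k) c).2 h0
  refine h1.congr fun n => ?_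
  push_cast; ring

noncomputable def G (k : ℕ) (n : ℕ) : ℝ := (-2/((n:ℝ)+1))^k + (2/((n:ℝ)+3))^k

lemma G_eq (k n : ℕ) : G k n = (-2)^k * (1/((n:ℝ)+1)^k) + 2^k * (1/((n:ℝ)+3)^k) := by
  unfold G; rw [div_pow, div_pow]; ring

/-- the telescoping auxiliary function -/
noncomputable def ft (k : ℕ) (n : ℕ) : ℝ := 1/((n:ℝ)+1)^k + 1/((n:ℝ)+2)^k

lemma ft_nonneg (k n : ℕ) : 0 ≤ ft k n := by
  unfold ft
  positivity

lemma ft_antitone (k : ℕ) {m n : ℕ} (h : m ≤ n) : ft k n ≤ ft k m := by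
  have h' : (m:ℝ) ≤ (n:ℝ) := Nat.cast_le.2 h
  unfold ft
  gcongr 1/(?_+1)^k + 1/(?_+2)^k <;> linarith

lemma ft_tendsto (k : ℕ) (hk : 1 ≤ k) :
    Filter.Tendsto (fun n : ℕ => ft k n) Filter.atTop (nhds 0) := by
  have base : Filter.Tendsto (fun n : ℕ => 1/((n:ℝ)+1)) Filter.atTop (nhds 0) :=
    tendsto_one_div_add_atTop_nhds_zero_nat
  have base2 : Filter.Tendsto (fun n : ℕ => 2*(1/((n:ℝ)+1))) Filter.atTop (nhds 0) := by
    simpa using base.const_mul 2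
  refine squeeze_zero (fun n => ft_nonneg k n) (fun n => ?_) base2
  unfold ft
  have h1 : 1/((n:ℝ)+1)^k ≤ 1/((n:ℝ)+1) := by
    apply one_div_le_one_div_of_le (by positivity)
    calc ((n:ℝ)+1) = ((n:ℝ)+1)^1 := (pow_one _).symm
    _ ≤ ((n:ℝ)+1)^k := pow_le_pow_right₀ (by have := Nat.cast_nonneg (α:=ℝ) n; linarith) hk
  have h2 : 1/((n:ℝ)+2)^k ≤ 1/((n:ℝ)+1) := by
    apply one_div_le_one_div_of_le (by positivity)
    calc ((n:ℝ)+1) = ((n:ℝ)+1)^1 := (pow_one _).symm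
    _ ≤ ((n:ℝ)+1)^k := pow_le_pow_right₀ (by have := Nat.cast_nonneg (α:=ℝ) n; linarith) hk
    _ ≤ ((n:ℝ)+2)^k := by gcongr <;> linarith [Nat.cast_nonneg (α:=ℝ) n]
  linarith

lemma tel_hasSum (k : ℕ) (hk : 1 ≤ k) :
    HasSum (fun n : ℕ => ft k n - ft k (n+1)) (ft k 0) := by
  have hpos : ∀ n : ℕ, 0 ≤ ft k n - ft k (n+1) :=
    fun n => sub_nonneg.2 (ft_antitone k (Nat.le_succ n))
  have hps : ∀ n : ℕ, ∑ i ∈ Finset.range n, (ft k i - ft k (i+1)) = ft k 0 - ft k n :=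
    fun n => Finset.sum_range_sub' (ft k) n
  have hsummable : Summable (fun n : ℕ => ft k n - ft k (n+1)) := by
    apply summable_of_sum_range_le hpos (c := ft k 0)
    intro n
    rw [hps n]
    have := ft_nonneg k n
    linarith
  have h1 := hsummable.hasSum
  have h2 := h1.tendsto_sum_nat
  have h3 : Filter.Tendsto (fun n => ∑ i ∈ Finset.range n, (ft k i - ft k (i+1)))
      Filter.atTop (nhds (ft k 0)) := by
    simp only [hps]
    have := (ft_tendsto k hk).const_sub (ft k 0)
    simpa using this
  have := tendsto_nhds_unique h2 h3
  rwa [this] at h1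

lemma G_odd_eq (k : ℕ) (hk : Odd k) (n : ℕ) : G k n = -2^k * (ft k n - ft k (n+1)) := by
  rw [G_eq, hk.neg_pow]
  unfold ft
  push_cast
  rw [show ((n:ℝ)+1)+1 = (n:ℝ)+2 by ring, show ((n:ℝ)+1)+2 = (n:ℝ)+3 by ring]
  ring

lemma summable_G (k : ℕ) (hk : 1 ≤ k) : Summable (G k) := by
  rcases Nat.even_or_odd k with he | ho
  · have h2 : 2 ≤ k := by rcases he with ⟨j, rfl⟩; omega
    have s1 := summable_shift 1 k h2
    have s3 := summable_shift 3 k h2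
    have h := ((s1.mul_left ((-2:ℝ)^k)).add (s3.mul_left ((2:ℝ)^k)))
    refine h.congr fun n => ?_
    rw [G_eq]
    norm_num
  · have h := ((tel_hasSum k hk).summable.mul_left (-2^k : ℝ))
    refine h.congr fun n => ?_
    rw [G_odd_eq k ho n]

lemma tsum_G_odd (k : ℕ) (hk : 1 ≤ k) (ho : Odd k) : ∑' n, G k n = -(2^k) - 1 := by
  have h := (tel_hasSum k hk).mul_left (-2^k : ℝ)
  have heq : (fun n => (-2^k : ℝ)*(ft k n - ft k (n+1))) = G k :=
    funext fun n => (G_odd_eq k ho n).symm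
  rw [heq] at h
  rw [h.tsum_eq]
  unfold ft
  have h2 : (2:ℝ)^k ≠ 0 := by positivity
  push_cast
  rw [show ((0:ℝ)+1) = 1 by norm_num, show ((0:ℝ)+2) = 2 by norm_num, one_pow]
  field_simp
  ring

lemma Z_summable (k : ℕ) (hk : 2 ≤ k) : Summable (fun n : ℕ => 1/((n:ℝ)+1)^k) := by
  have := summable_shift 1 k hk
  refine this.congr fun n => ?_
  norm_num

lemma tsum_shift3 (k : ℕ) (hk : 2 ≤ k) : ∑' n:ℕ, 1/((n:ℝ)+3)^k = Z k - 1 - 1/2^k := by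
  have hsum := Z_summable k hk
  have h := Summable.sum_add_tsum_nat_add (f := fun n : ℕ => 1/((n:ℝ)+1)^k) 2 hsum
  have h2 : ∑' n : ℕ, 1/(((n+2:ℕ):ℝ)+1)^k = ∑' n:ℕ, 1/((n:ℝ)+3)^k := by
    refine tsum_congr fun n => ?_
    push_cast
    norm_num [add_assoc]
  have h3 : ∑ i ∈ Finset.range 2, 1/((i:ℝ)+1)^k = 1 + 1/2^k := by
    rw [Finset.sum_range_succ, Finset.sum_range_one]
    norm_num
  rw [h3, h2] at h
  unfold Z
  linarith [h]

lemma tsum_G_even (k : ℕ) (hk : 2 ≤ k) (he : Even k) :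
    ∑' n, G k n = 2^(k+1) * Z k - 2^k - 1 := by
  have s1 := Z_summable k hk
  have s3 : Summable (fun n : ℕ => 1/((n:ℝ)+3)^k) := by
    have := summable_shift 3 k hk
    refine this.congr fun n => ?_
    norm_num
  have h : ∑' n, G k n
      = ∑' n : ℕ, ((-2:ℝ)^k * (1/((n:ℝ)+1)^k) + (2:ℝ)^k * (1/((n:ℝ)+3)^k)) :=
    tsum_congr fun n => G_eq k n
  rw [h, Summable.tsum_add (s1.mul_left _) (s3.mul_left _), tsum_mul_left, tsum_mul_left,
    tsum_shift3 k hk, he.neg_pow]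
  have hZ : ∑' n : ℕ, 1/((n:ℝ)+1)^k = Z k := rfl
  rw [hZ]
  have h2 : (2:ℝ)^k ≠ 0 := by positivity
  field_simp
  ring

lemma sumA (q : ℕ) : ∑ i ∈ Finset.range (q+1), ((q+i).choose i : ℝ) = ((2*q+1).choose q : ℝ) := by
  rw [← Nat.cast_sum]
  norm_cast
  rw [hockey q q]
  congr 1
  omega

lemma sumB (q : ℕ) :
    ∑ i ∈ Finset.range (q+1), ((q+i).choose i : ℝ) * 2^(q+1-i) = 2^(2*q+1) := by
  have h : (2:ℝ) + 2 = 2 * 2 := by norm_num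
  have hs := starAux 2 2 h q
  have h2 : ∀ i ∈ Finset.range (q+1),
      ((q+i).choose i : ℝ) * ((2:ℝ)^(q+1-i) + 2^(q+1-i))
        = 2 * (((q+i).choose i : ℝ) * 2^(q+1-i)) := fun i _ => by ring
  rw [Finset.sum_congr rfl h2, ← Finset.mul_sum] at hs
  have h4 : ((2:ℝ)*2)^(q+1) = 2 * 2^(2*q+1) := by
    rw [show (2:ℝ)*2 = 2^2 by norm_num, ← pow_mul]
    rw [show 2*(q+1) = (2*q+1)+1 by omega, pow_succ]
    ring
  rw [h4] at hs
  linarith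

lemma pointwise (q n : ℕ) :
    (2:ℝ)^(2*(q+1)) / (((n:ℝ)+1)^(q+1) * ((n:ℝ)+3)^(q+1))
      = (-1:ℝ)^(q+1)
        * ∑ i ∈ Finset.range (q+1), (((q+i).choose i : ℝ) * G (q+1-i) n) := by
  have hx0 : (0:ℝ) ≤ (n:ℝ) := Nat.cast_nonneg n
  have h1 : ((n:ℝ)+1) ≠ 0 := by positivity
  have h3 : ((n:ℝ)+3) ≠ 0 := by positivity
  have h : (-2/((n:ℝ)+1)) + (2/((n:ℝ)+3)) = (-2/((n:ℝ)+1)) * (2/((n:ℝ)+3)) := by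
    field_simp
    ring
  have hs := starAux (-2/((n:ℝ)+1)) (2/((n:ℝ)+3)) h q
  have hG : ∀ i, (-2/((n:ℝ)+1))^(q+1-i) + (2/((n:ℝ)+3))^(q+1-i) = G (q+1-i) n :=
    fun i => rfl
  simp_rw [hG] at hs
  rw [← hs]
  have hat : (-2/((n:ℝ)+1)) * (2/((n:ℝ)+3)) = (-1) * (4 / (((n:ℝ)+1)*((n:ℝ)+3))) := by
    field_simp
    ring
  rw [hat, mul_pow, ← mul_assoc, ← mul_pow, div_pow, mul_pow, pow_mul]
  norm_num
  have hone : (-1:ℝ)^(q+1)*(-1:ℝ)^(q+1) = 1 := by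
    rw [← mul_pow]; norm_num
  rw [hone, one_mul]

lemma tsum_G_val (k : ℕ) (hk : 1 ≤ k) :
    ∑' n, G k n = (if Even k then 2^(k+1) * Z k else 0) - 2^k - 1 := by
  rcases Nat.even_or_odd k with he | ho
  · rw [if_pos he, tsum_G_even k (by rcases he with ⟨j,rfl⟩; omega) he]
  · rw [if_neg (Nat.not_even_iff_odd.2 ho), tsum_G_odd k hk ho]
    ring

lemma reindex (q : ℕ) (F : ℕ → ℝ) :
    ∑ i ∈ Finset.range (q+1), (if Even (q+1-i) then F (q+1-i) else 0)
      = ∑ m ∈ Finset.Icc 1 ((q+1)/2), F (2*m) := by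
  rw [← Finset.sum_filter]
  refine Finset.sum_nbij' (fun i => (q+1-i)/2) (fun m => q+1-2*m) ?_ ?_ ?_ ?_ ?_
  · intro a ha
    simp only [Finset.mem_filter, Finset.mem_range] at ha
    obtain ⟨ha1, j, hj⟩ := ha
    simp only [Finset.mem_Icc]
    omega
  · intro m hm
    simp only [Finset.mem_Icc] at hm
    simp only [Finset.mem_filter, Finset.mem_range]
    exact ⟨by omega, ⟨m, by omega⟩⟩
  · intro a ha
    simp only [Finset.mem_filter, Finset.mem_range] at ha
    obtain ⟨ha1, j, hj⟩ := ha
    show q+1-2*((q+1-a)/2) = a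
    omega
  · intro m hm
    simp only [Finset.mem_Icc] at hm
    show (q+1-(q+1-2*m))/2 = m
    omega
  · intro a ha
    simp only [Finset.mem_filter, Finset.mem_range] at ha
    obtain ⟨ha1, j, hj⟩ := ha
    show F (q+1-a) = F (2*((q+1-a)/2))
    congr 1
    omega

lemma C_real (q : ℕ) : C (q+1) = (-1:ℝ)^(q+1) *
    ((∑ m ∈ Finset.Icc 1 ((q+1)/2),
        (2:ℝ)^(2*m+1) * (((2*(q+1)-2*m-1).choose q : ℕ) : ℝ) * Z (2*m))
      - (((2*(q+1)-1).choose q : ℕ) : ℝ) - 2^(2*(q+1)-1)) := by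
  have hC : C (q+1) = ∑' n : ℕ, ((-1:ℝ)^(q+1)
      * ∑ i ∈ Finset.range (q+1), (((q+i).choose i : ℝ) * G (q+1-i) n)) := by
    rw [C]
    exact tsum_congr fun n => pointwise q n
  rw [hC, tsum_mul_left]
  congr 1
  rw [Summable.tsum_finsetSum (fun i hi => Summable.mul_left _
    (summable_G (q+1-i) (by simp only [Finset.mem_range] at hi; omega)))]
  have hterm : ∀ i ∈ Finset.range (q+1),
      ∑' n, (((q+i).choose i : ℝ) * G (q+1-i) n)
        = (if Even (q+1-i) then ((2*q+1-(q+1-i)).choose q : ℝ) * (2^(q+1-i+1) * Z (q+1-i)) else 0)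
            - ((q+i).choose i : ℝ)*2^(q+1-i) - ((q+i).choose i : ℝ) := by
    intro i hi
    simp only [Finset.mem_range] at hi
    rw [tsum_mul_left, tsum_G_val (q+1-i) (by omega)]
    have hcc : ((q+i).choose i : ℝ) = ((2*q+1-(q+1-i)).choose q : ℝ) := by
      norm_cast
      rw [show 2*q+1-(q+1-i) = q+i by omega]
      rw [show ((q+i).choose q) = (q+i).choose ((q+i)-i) from by congr 1; omega]
      exact (Nat.choose_symm (by omega)).symm
    split_ifs with hev
    · rw [hcc]; ring
    · ring
  rw [Finset.sum_congr rfl hterm]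
  rw [Finset.sum_sub_distrib, Finset.sum_sub_distrib, sumA, sumB]
  have hre := reindex q (fun k => ((2*q+1-k).choose q : ℝ) * (2^(k+1) * Z k))
  rw [hre]
  have hsum_eq : ∑ m ∈ Finset.Icc 1 ((q+1)/2), (((2*q+1-2*m).choose q : ℕ) : ℝ) * (2^(2*m+1) * Z (2*m))
      = ∑ m ∈ Finset.Icc 1 ((q+1)/2),
          (2:ℝ)^(2*m+1) * (((2*(q+1)-2*m-1).choose q : ℕ) : ℝ) * Z (2*m) := by
    refine Finset.sum_congr rfl fun m hm => ?_
    rw [show 2*(q+1)-2*m-1 = 2*q+1-2*m by omega]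
    ring
  rw [hsum_eq]
  rw [show 2*(q+1)-1 = 2*q+1 by omega]
  ring

lemma zeta_eq (m : ℕ) (hm : 1 ≤ m) : riemannZeta (2*(m:ℂ)) = ((Z (2*m) : ℝ) : ℂ) := by
  rw [show (2*(m:ℂ)) = ((2*m:ℕ):ℂ) by push_cast; ring]
  rw [zeta_eq_tsum_one_div_nat_add_one_cpow
    (by rw [Complex.natCast_re]; exact_mod_cast (by omega : 1 < 2*m))]
  rw [Z, Complex.ofReal_tsum]
  refine tsum_congr fun n => ?_
  rw [Complex.cpow_natCast]
  push_cast
  norm_num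

end Aux

theorem C_eq_zeta_combination (p : ℕ) (hp : 1 ≤ p) :
    (C p : ℂ) = (-1 : ℂ) ^ p *
      ((∑ m ∈ Finset.Icc 1 (p / 2),
          (2 : ℂ) ^ (2 * m + 1) * (Nat.choose (2 * p - 2 * m - 1) (p - 1) : ℂ) *
            riemannZeta (2 * m))
        - (Nat.choose (2 * p - 1) (p - 1) : ℂ) - (2 : ℂ) ^ (2 * p - 1)) := by
  obtain ⟨q, rfl⟩ : ∃ q, p = q+1 := ⟨p-1, by omega⟩
  simp only [Nat.add_sub_cancel]
  rw [C_real q]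
  push_cast
  congr 1
  congr 1
  congr 1
  refine Finset.sum_congr rfl fun m hm => ?_
  simp only [Finset.mem_Icc] at hm
  rw [zeta_eq m hm.1]
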